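/- arXiv:1810.05249 — 2 statements merged into one kernel-verified Lean document; each statement's English description precedes it below -/
import Mathlib

section
/- Let p and q be primes with p ≡ 3 (mod 4), q ≡ 1 (mod 8), and q a square modulo p (Legendre symbol (q|p) = 1). Then the quaternion algebra ℍ[ℚ, −p, −q] is the definite quaternion algebra of discriminant p: for every prime ℓ, the localization ℍ[ℚ_ℓ, −p, −q] is a division ring if and only if ℓ = p, and ℍ[ℝ, −p, −q] is a division ring. -/
open Quaternion


variable {F : Type*} [Field F] {c₁ c₂ : F}

noncomputable def qn (a : ℍ[F,c₁,c₂]) : F := (a * star a).re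

lemma qn_eq (a : ℍ[F,c₁,c₂]) :
    qn a = a.re^2 - c₁ * a.imI^2 - c₂ * a.imJ^2 + c₁*c₂*a.imK^2 := by
  simp [qn, QuaternionAlgebra.re_mul]; ring

lemma mul_star_eq (a : ℍ[F,c₁,c₂]) : a * star a = QuaternionAlgebra.coe (qn a) :=
  a.mul_star_eq_coe

lemma star_mul_eq (a : ℍ[F,c₁,c₂]) : star a * a = QuaternionAlgebra.coe (qn a) := by
  rw [star_comm_self']; exact a.mul_star_eq_coe

lemma qsmul_coe (r x : F) :
    r • (QuaternionAlgebra.coe x : ℍ[F,c₁,c₂]) = QuaternionAlgebra.coe (r * x) := by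
  ext <;> simp [QuaternionAlgebra.coe]

lemma isUnit_of_qn (a : ℍ[F,c₁,c₂]) (h : qn a ≠ 0) : IsUnit a := by
  refine ⟨⟨a, (qn a)⁻¹ • star a, ?_, ?_⟩, rfl⟩
  · rw [mul_smul_comm, mul_star_eq, qsmul_coe, inv_mul_cancel₀ h,
      QuaternionAlgebra.coe_one]
  · rw [smul_mul_assoc, star_mul_eq, qsmul_coe, inv_mul_cancel₀ h,
      QuaternionAlgebra.coe_one]

lemma not_isUnit_of_qn (a : ℍ[F,c₁,c₂]) (ha : a ≠ 0) (h : qn a = 0) : ¬ IsUnit a := by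
  intro hu
  obtain ⟨b, hb⟩ := hu.exists_left_inv
  have h0 : a * star a = 0 := by rw [mul_star_eq, h, QuaternionAlgebra.coe_zero]
  have hs : star a = 0 := by
    have := congrArg (fun z => b * z) h0
    simpa [← mul_assoc, hb] using this
  exact ha (by simpa using congrArg star hs)
open Polynomial

lemma padic_sq_lift (ℓ : ℕ) [Fact ℓ.Prime] (z a : ℤ) (hdvd : (ℓ:ℤ) ∣ a^2 - z)
    (hu : ¬ (ℓ:ℤ) ∣ 2*a) : ∃ t : ℚ_[ℓ], t^2 = (z : ℚ_[ℓ]) := by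
  set F : Polynomial ℤ_[ℓ] := X^2 - C (z : ℤ_[ℓ]) with hF
  have heval : F.eval (a : ℤ_[ℓ]) = ((a^2 - z : ℤ) : ℤ_[ℓ]) := by push_cast; simp [hF]
  have hderiv : F.derivative.eval (a : ℤ_[ℓ]) = ((2*a : ℤ) : ℤ_[ℓ]) := by
    push_cast; simp [hF]; norm_num
  have h1 : ‖F.eval (a : ℤ_[ℓ])‖ < 1 := by
    rw [heval]; exact (PadicInt.norm_int_lt_one_iff_dvd _).2 hdvd
  have h2 : ‖F.derivative.eval (a : ℤ_[ℓ])‖ = 1 := by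
    rw [hderiv]
    refine le_antisymm (PadicInt.norm_le_one _) ?_
    by_contra h
    exact hu ((PadicInt.norm_int_lt_one_iff_dvd _).1 (lt_of_not_ge h))
  obtain ⟨t, ht, -⟩ := hensels_lemma (F := F) (a := (a : ℤ_[ℓ])) (by simp only [Polynomial.coe_aeval_eq_eval]; rw [h2]; simpa using h1)
  refine ⟨(t : ℚ_[ℓ]), ?_⟩
  have : t^2 = ((z:ℤ) : ℤ_[ℓ]) := by
    have := ht; simp [hF, sub_eq_zero] at this; exact this
  calc (t : ℚ_[ℓ])^2 = ((t^2 : ℤ_[ℓ]) : ℚ_[ℓ]) := by push_cast; ring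
  _ = (z : ℚ_[ℓ]) := by rw [this]; push_cast; rfl

lemma two_adic_sq_lift (z : ℤ) (h : (8:ℤ) ∣ 1 - z) : ∃ t : ℚ_[2], t^2 = (z : ℚ_[2]) := by
  set F : Polynomial ℤ_[2] := X^2 - C (z : ℤ_[2]) with hF
  have heval : F.eval (1 : ℤ_[2]) = ((1 - z : ℤ) : ℤ_[2]) := by push_cast; simp [hF]
  have hderiv : F.derivative.eval (1 : ℤ_[2]) = ((2 : ℤ) : ℤ_[2]) := by
    push_cast; simp [hF]; norm_num
  have h1 : ‖F.eval (1 : ℤ_[2])‖ ≤ ((2:ℝ)^(3:ℕ))⁻¹ := by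
    rw [heval]
    have := (PadicInt.norm_int_le_pow_iff_dvd (p := 2) (k := 1 - z) (n := 3)).2 (by norm_num [h])
    simpa using this
  have h2 : ‖F.derivative.eval (1 : ℤ_[2])‖ = 2⁻¹ := by
    rw [hderiv]
    simpa using PadicInt.norm_p (p := 2)
  obtain ⟨t, ht, -⟩ := hensels_lemma (F := F) (a := (1 : ℤ_[2]))
    (by simp only [Polynomial.coe_aeval_eq_eval]; rw [h2]; refine lt_of_le_of_lt h1 (by norm_num))
  refine ⟨(t : ℚ_[2]), ?_⟩
  have : t^2 = ((z:ℤ) : ℤ_[2]) := by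
    have := ht; simp [hF, sub_eq_zero] at this; exact this
  calc (t : ℚ_[2])^2 = ((t^2 : ℤ_[2]) : ℚ_[2]) := by push_cast; ring
  _ = (z : ℚ_[2]) := by rw [this]; push_cast; rfl

section Ppart
variable (p q : ℕ) [Fact p.Prime]

lemma unit_sq_add (hns : ¬ IsSquare (-(q:ZMod p))) (w : ℚ_[p]) (hw : ‖w‖ = 1) :
    ‖w^2 + (q:ℚ_[p])‖ = 1 := by
  set W : ℤ_[p] := ⟨w, by rw [hw]⟩ with hW
  have hcoe : w^2 + (q:ℚ_[p]) = ((W^2 + (q : ℤ_[p]) : ℤ_[p]) : ℚ_[p]) := by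
    push_cast [hW]; rfl
  rw [hcoe, ← PadicInt.norm_def]
  refine le_antisymm (PadicInt.norm_le_one _) ?_
  by_contra h
  push_neg at h
  have hker : (W^2 + (q : ℤ_[p])) ∈ IsLocalRing.maximalIdeal ℤ_[p] := by
    rw [IsLocalRing.mem_maximalIdeal, PadicInt.mem_nonunits]; exact h
  rw [← PadicInt.ker_toZMod, RingHom.mem_ker] at hker
  apply hns
  refine ⟨PadicInt.toZMod W, ?_⟩
  have : (PadicInt.toZMod W)^2 + (q : ZMod p) = 0 := by
    simpa [map_add, map_pow, map_natCast] using hker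
  rw [← sq]; linear_combination -this

lemma norm_sq_add_q (hns : ¬ IsSquare (-(q:ZMod p))) (hq1 : ‖(q:ℚ_[p])‖ = 1) (u v : ℚ_[p]) :
    ‖u^2 + q*v^2‖ = max (‖u‖^2) (‖v‖^2) := by
  rcases lt_trichotomy ‖u‖ ‖v‖ with h | h | h
  · have h2 : ‖u^2‖ < ‖q*v^2‖ := by
      rw [norm_pow, norm_mul, norm_pow, hq1, one_mul]
      exact pow_lt_pow_left₀ h (norm_nonneg _) two_ne_zero
    rw [Padic.add_eq_max_of_ne (ne_of_lt h2), max_eq_right h2.le, norm_mul, norm_pow, hq1,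
      one_mul, max_eq_right (pow_le_pow_left₀ (norm_nonneg _) h.le 2)]
  · rcases eq_or_ne v 0 with rfl | hv
    · have hu : u = 0 := by rw [← norm_eq_zero, h, norm_zero]
      simp [hu]
    · have hv' : ‖v‖ ≠ 0 := by simpa using hv
      have hw : ‖u / v‖ = 1 := by rw [norm_div, h, div_self hv']
      have hfac : u^2 + q*v^2 = v^2 * ((u/v)^2 + q) := by field_simp
      rw [hfac, norm_mul, unit_sq_add p q hns _ hw, mul_one, norm_pow, h, max_self]
  · have h2 : ‖q*v^2‖ < ‖u^2‖ := by
      rw [norm_pow, norm_mul, norm_pow, hq1, one_mul]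
      exact pow_lt_pow_left₀ h (norm_nonneg _) two_ne_zero
    rw [Padic.add_eq_max_of_ne (ne_of_gt h2), max_eq_left h2.le, norm_pow,
      max_eq_left (pow_le_pow_left₀ (norm_nonneg _) h.le 2)]

end Ppart

section Aniso
variable (p q : ℕ) [Fact p.Prime]

lemma qn_ne_zero (hns : ¬ IsSquare (-(q:ZMod p))) (hq1 : ‖(q:ℚ_[p])‖ = 1)
    (x : ℍ[ℚ_[p], -(p:ℚ_[p]), -(q:ℚ_[p])]) (hx : x ≠ 0) : qn x ≠ 0 := by
  have hp0 : (0:ℝ) < p := by exact_mod_cast (Fact.out (p := p.Prime)).pos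
  have hp1 : (p:ℝ) ≠ 1 := by
    have := (Fact.out (p := p.Prime)).one_lt; exact_mod_cast this.ne'
  set A : ℚ_[p] := x.re^2 + q*x.imJ^2 with hAdef
  set B : ℚ_[p] := x.imI^2 + q*x.imK^2 with hBdef
  have hqn : qn x = A + p * B := by rw [qn_eq]; push_cast [hAdef, hBdef]; ring
  have hA : ‖A‖ = max (‖x.re‖^2) (‖x.imJ‖^2) := norm_sq_add_q p q hns hq1 _ _
  have hB : ‖B‖ = max (‖x.imI‖^2) (‖x.imK‖^2) := norm_sq_add_q p q hns hq1 _ _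
  intro h0
  have hAB : ‖A‖ = ‖(p:ℚ_[p]) * B‖ := by
    have hA' : A = -((p:ℚ_[p]) * B) := by linear_combination h0 - hqn
    rw [hA', norm_neg]
  -- case both zero
  by_cases hAz : ‖A‖ = 0
  · have hBz : ‖B‖ = 0 := by
      have hpne : (p:ℚ_[p]) ≠ 0 := Nat.cast_ne_zero.2 (Fact.out (p := p.Prime)).ne_zero
      have := hAB; rw [hAz, norm_mul] at this
      rcases mul_eq_zero.1 this.symm with h | h
      · exact absurd (norm_eq_zero.1 h) hpne
      · exact h
    apply hx
    have c1 : ‖x.re‖^2 ≤ 0 := by rw [← hAz, hA]; exact le_max_left _ _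
    have c2 : ‖x.imJ‖^2 ≤ 0 := by rw [← hAz, hA]; exact le_max_right _ _
    have c3 : ‖x.imI‖^2 ≤ 0 := by rw [← hBz, hB]; exact le_max_left _ _
    have c4 : ‖x.imK‖^2 ≤ 0 := by rw [← hBz, hB]; exact le_max_right _ _
    ext <;> [skip; skip; skip; skip] <;>
      simp only [QuaternionAlgebra.re_zero, QuaternionAlgebra.imI_zero,
        QuaternionAlgebra.imJ_zero, QuaternionAlgebra.imK_zero] <;>
      rw [← norm_eq_zero] <;> nlinarith [norm_nonneg x.re, norm_nonneg x.imI,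
        norm_nonneg x.imJ, norm_nonneg x.imK]
  · -- A nonzero, hence B nonzero, parity contradiction
    have hBz : ‖B‖ ≠ 0 := by
      intro h; rw [hAB, norm_mul, h, mul_zero] at hAz; exact hAz rfl
    obtain ⟨c, hc0, hcA⟩ : ∃ c : ℚ_[p], c ≠ 0 ∧ ‖A‖ = ‖c‖^2 := by
      rcases max_cases (‖x.re‖^2) (‖x.imJ‖^2) with ⟨h1, -⟩ | ⟨h1, -⟩
      · exact ⟨x.re, fun h => hAz (by rw [hA, h1, h, norm_zero]; ring), by rw [hA, h1]⟩
      · exact ⟨x.imJ, fun h => hAz (by rw [hA, h1, h, norm_zero]; ring), by rw [hA, h1]⟩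
    obtain ⟨d, hd0, hdB⟩ : ∃ d : ℚ_[p], d ≠ 0 ∧ ‖B‖ = ‖d‖^2 := by
      rcases max_cases (‖x.imI‖^2) (‖x.imK‖^2) with ⟨h1, -⟩ | ⟨h1, -⟩
      · exact ⟨x.imI, fun h => hBz (by rw [hB, h1, h, norm_zero]; ring), by rw [hB, h1]⟩
      · exact ⟨x.imK, fun h => hBz (by rw [hB, h1, h, norm_zero]; ring), by rw [hB, h1]⟩
    have e1 : ‖A‖ = (p:ℝ)^(-c.valuation * 2) := by
      rw [hcA, Padic.norm_eq_zpow_neg_valuation hc0, ← zpow_natCast ((p:ℝ)^(-c.valuation)) 2,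
        ← zpow_mul]
      norm_num
    have e2 : ‖(p:ℚ_[p]) * B‖ = (p:ℝ)^(-1 + -d.valuation * 2) := by
      rw [norm_mul, Padic.norm_p, hdB, Padic.norm_eq_zpow_neg_valuation hd0,
        ← zpow_natCast ((p:ℝ)^(-d.valuation)) 2, ← zpow_mul, ← zpow_neg_one (p:ℝ),
        ← zpow_add₀ (ne_of_gt hp0)]
      norm_num
    have := zpow_right_injective₀ hp0 hp1 (e1 ▸ e2 ▸ hAB)
    omega

end Aniso

section Isotropic

lemma exists_isotropic (p q ℓ : ℕ) [Fact p.Prime] [Fact q.Prime] [Fact ℓ.Prime]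
    (hp4 : p % 4 = 3) (hq8 : q % 8 = 1) (hqsq : IsSquare ((p : ZMod q)))
    (hlp : ℓ ≠ p) :
    ∃ α β γ : ℚ_[ℓ], α^2 + p*β^2 + q*γ^2 = 0 ∧ (β = 1 ∨ γ = 1) := by
  have hqQ : (q : ℚ_[ℓ]) ≠ 0 := Nat.cast_ne_zero.2 (Fact.out (p := q.Prime)).ne_zero
  have hpQ : (p : ℚ_[ℓ]) ≠ 0 := Nat.cast_ne_zero.2 (Fact.out (p := p.Prime)).ne_zero
  by_cases hl2 : ℓ = 2
  · subst hl2
    obtain ⟨s, hs⟩ := two_adic_sq_lift q (by omega)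
    push_cast at hs
    have hs0 : s ≠ 0 := by intro h; rw [h] at hs; exact hqQ (by simpa using hs.symm)
    rcases (by omega : p % 8 = 3 ∨ p % 8 = 7) with h8 | h8
    · obtain ⟨t, ht⟩ := two_adic_sq_lift (-(p:ℤ)-4) (by omega)
      push_cast at ht
      refine ⟨t, 1, 2/s, ?_, Or.inl rfl⟩
      have h4 : (q:ℚ_[2])*(2/s)^2 = 4 := by rw [div_pow, ← hs]; field_simp; norm_num
      rw [h4, one_pow, mul_one]
      linear_combination ht
    · obtain ⟨t, ht⟩ := two_adic_sq_lift (-(p:ℤ)) (by omega)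
      push_cast at ht
      exact ⟨t, 1, 0, by rw [ht]; ring, Or.inl rfl⟩
  · by_cases hlq : ℓ = q
    · subst hlq
      have hlp' : (p : ZMod ℓ) ≠ 0 := by
        rw [Ne, ZMod.natCast_eq_zero_iff]
        intro h
        exact hlp ((Nat.prime_dvd_prime_iff_eq Fact.out Fact.out).1 h)
      obtain ⟨i0, hi0⟩ : IsSquare (-1 : ZMod ℓ) :=
        ZMod.exists_sq_eq_neg_one_iff.2 (by omega)
      obtain ⟨b0, hb0⟩ := hqsq
      set s : ZMod ℓ := i0 * b0 with hsdef
      have hs2 : s * s = -(p : ZMod ℓ) := by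
        have : (i0 * b0) * (i0 * b0) = (i0*i0) * (b0*b0) := by ring
        rw [hsdef, this, ← hi0, ← hb0]; ring
      have hs0 : s ≠ 0 := by
        intro h
        rw [h, mul_zero] at hs2
        exact hlp' (by simpa using hs2.symm)
      have hdvd : (ℓ:ℤ) ∣ (s.val:ℤ)^2 - (-(p:ℤ)) := by
        rw [← ZMod.intCast_zmod_eq_zero_iff_dvd]
        push_cast
        rw [ZMod.natCast_val, ZMod.cast_id]
        linear_combination hs2 - sq s
      have hu : ¬ (ℓ:ℤ) ∣ 2 * (s.val:ℤ) := by
        intro h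
        rcases (Nat.prime_iff_prime_int.1 Fact.out).dvd_mul.1 h with h' | h'
        · have : (ℓ:ℤ) ≤ 2 := Int.le_of_dvd (by norm_num) h'
          have : 2 ≤ ℓ := (Fact.out (p := ℓ.Prime)).two_le
          omega
        · apply hs0
          have : ((s.val : ℤ) : ZMod ℓ) = 0 := (ZMod.intCast_zmod_eq_zero_iff_dvd _ _).2 h'
          rwa [Int.cast_natCast, ZMod.natCast_val, ZMod.cast_id] at this
      obtain ⟨t, ht⟩ := padic_sq_lift ℓ (-(p:ℤ)) s.val hdvd hu
      push_cast at ht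
      exact ⟨t, 1, 0, by rw [ht]; ring, Or.inl rfl⟩
    · -- generic odd prime ℓ ∉ {2, p, q}
      have hlp' : (p : ZMod ℓ) ≠ 0 := by
        rw [Ne, ZMod.natCast_eq_zero_iff]
        intro h
        exact hlp ((Nat.prime_dvd_prime_iff_eq Fact.out Fact.out).1 h)
      have hlq' : (q : ZMod ℓ) ≠ 0 := by
        rw [Ne, ZMod.natCast_eq_zero_iff]
        intro h
        exact hlq ((Nat.prime_dvd_prime_iff_eq Fact.out Fact.out).1 h)
      have hodd : Fintype.card (ZMod ℓ) % 2 = 1 := by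
        rw [ZMod.card]
        exact Nat.odd_iff.1 ((Fact.out (p := ℓ.Prime)).odd_of_ne_two hl2)
      obtain ⟨a, b, hab⟩ := FiniteField.exists_root_sum_quadratic
        (f := Polynomial.X^2)
        (g := Polynomial.C (p : ZMod ℓ) * Polynomial.X^2 + Polynomial.C 0 * Polynomial.X
          + Polynomial.C (q : ZMod ℓ))
        (Polynomial.degree_X_pow 2) (Polynomial.degree_quadratic hlp') hodd
      simp only [Polynomial.eval_add, Polynomial.eval_mul, Polynomial.eval_pow,
        Polynomial.eval_X, Polynomial.eval_C, Polynomial.map_zero, zero_mul, add_zero] at hab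
      by_cases ha : a = 0
      · rw [ha] at hab
        have hb : (p : ZMod ℓ) * b^2 + q = 0 := by linear_combination hab
        have hb0 : b ≠ 0 := by
          intro h; rw [h] at hb; apply hlq'; simpa using hb
        have hdvd : (ℓ:ℤ) ∣ ((p * b.val : ℕ):ℤ)^2 - (-((p:ℤ)*q)) := by
          rw [← ZMod.intCast_zmod_eq_zero_iff_dvd]
          push_cast
          rw [ZMod.natCast_val, ZMod.cast_id]
          linear_combination (p:ZMod ℓ) * hb
        have hu : ¬ (ℓ:ℤ) ∣ 2 * ((p * b.val : ℕ):ℤ) := by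
          intro h
          rcases (Nat.prime_iff_prime_int.1 Fact.out).dvd_mul.1 h with h' | h'
          · have : (ℓ:ℤ) ≤ 2 := Int.le_of_dvd (by norm_num) h'
            have : 2 ≤ ℓ := (Fact.out (p := ℓ.Prime)).two_le
            omega
          · have : ((p * b.val : ℕ) : ZMod ℓ) = 0 := by
              have := (ZMod.intCast_zmod_eq_zero_iff_dvd _ ℓ).2 h'
              exact_mod_cast this
            rw [Nat.cast_mul, ZMod.natCast_val, ZMod.cast_id] at this
            rcases mul_eq_zero.1 this with h'' | h''
            · exact hlp' h''
            · exact hb0 h''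
        obtain ⟨t, ht⟩ := padic_sq_lift ℓ (-((p:ℤ)*q)) (p * b.val) hdvd hu
        push_cast at ht
        refine ⟨0, t/p, 1, ?_, Or.inr rfl⟩
        field_simp
        linear_combination ht
      · have hdvd : (ℓ:ℤ) ∣ (a.val:ℤ)^2 - (-((q:ℤ) + p * (b.val:ℤ)^2)) := by
          rw [← ZMod.intCast_zmod_eq_zero_iff_dvd]
          push_cast
          rw [ZMod.natCast_val, ZMod.cast_id, ZMod.natCast_val, ZMod.cast_id]
          linear_combination hab
        have hu : ¬ (ℓ:ℤ) ∣ 2 * (a.val:ℤ) := by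
          intro h
          rcases (Nat.prime_iff_prime_int.1 Fact.out).dvd_mul.1 h with h' | h'
          · have : (ℓ:ℤ) ≤ 2 := Int.le_of_dvd (by norm_num) h'
            have : 2 ≤ ℓ := (Fact.out (p := ℓ.Prime)).two_le
            omega
          · apply ha
            have : ((a.val : ℤ) : ZMod ℓ) = 0 := (ZMod.intCast_zmod_eq_zero_iff_dvd _ _).2 h'
            rwa [Int.cast_natCast, ZMod.natCast_val, ZMod.cast_id] at this
        obtain ⟨t, ht⟩ := padic_sq_lift ℓ (-((q:ℤ) + p * (b.val:ℤ)^2)) a.val hdvd hu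
        push_cast at ht
        refine ⟨t, (b.val : ℚ_[ℓ]), 1, ?_, Or.inr rfl⟩
        rw [ht]; ring

end Isotropic

/-- For primes `p ≡ 3 (mod 4)`, `q ≡ 1 (mod 8)` with `q` a square mod `p`, the
quaternion algebra `ℍ[ℚ, -p, -q]` is the definite quaternion algebra of
discriminant `p`: it is division exactly at `ℝ` and at the prime `p`. -/
theorem quaternionAlgebra_neg_p_neg_q_discriminant
    (p q : ℕ) [Fact p.Prime] [Fact q.Prime]
    (hp4 : p % 4 = 3) (hq8 : q % 8 = 1) (hleg : legendreSym p q = 1) :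
    (∀ (ℓ : ℕ) [Fact ℓ.Prime],
      ((∀ x : ℍ[ℚ_[ℓ], (-(p : ℚ_[ℓ])), (-(q : ℚ_[ℓ]))], x ≠ 0 → IsUnit x) ↔ ℓ = p)) ∧
    (∀ x : ℍ[ℝ, (-(p : ℝ)), (-(q : ℝ))], x ≠ 0 → IsUnit x) := by
  have hppr : p.Prime := Fact.out
  have hqpr : q.Prime := Fact.out
  have hq0p : ((q:ℤ) : ZMod p) ≠ 0 := by
    intro h
    exact one_ne_zero (hleg.symm.trans ((legendreSym.eq_zero_iff p (q:ℤ)).2 h))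
  have hpq : p ≠ q := by
    intro h
    apply hq0p
    subst h
    push_cast
    exact ZMod.natCast_self p
  have hq0p' : (q : ZMod p) ≠ 0 := by exact_mod_cast hq0p
  have hsqq : IsSquare ((q:ℤ) : ZMod p) := (legendreSym.eq_one_iff p hq0p).1 hleg
  have hsqq' : IsSquare ((q:ℕ) : ZMod p) := by push_cast at hsqq ⊢; exact hsqq
  have hns : ¬ IsSquare (-((q:ℕ) : ZMod p)) := by
    rintro ⟨r, hr⟩
    obtain ⟨s, hs⟩ := hsqq'
    have hs0 : s ≠ 0 := fun h => hq0p' (by rw [hs, h, mul_zero])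
    refine (ZMod.exists_sq_eq_neg_one_iff.1 ⟨r * s⁻¹, ?_⟩) hp4
    field_simp
    linear_combination hr + hs
  have hq1 : ‖(q:ℚ_[p])‖ = 1 := by
    have hle : ‖((q:ℤ):ℚ_[p])‖ ≤ 1 := Padic.norm_int_le_one _
    push_cast at hle
    rcases lt_or_eq_of_le hle with h | h
    · exfalso
      have hd : (p:ℤ) ∣ (q:ℤ) := (Padic.norm_intCast_lt_one_iff).1 (by push_cast; exact h)
      exact hpq ((Nat.prime_dvd_prime_iff_eq hppr hqpr).1 (Int.ofNat_dvd.1 hd))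
    · exact h
  have hq2 : q ≠ 2 := by omega
  have hp2 : p ≠ 2 := by omega
  have hrecip : legendreSym q p = 1 :=
    (legendreSym.quadratic_reciprocity_one_mod_four (by omega) hp2).symm.trans hleg
  have hp0q : ((p:ℤ) : ZMod q) ≠ 0 := by
    intro h
    exact one_ne_zero (hrecip.symm.trans ((legendreSym.eq_zero_iff q (p:ℤ)).2 h))
  have hqsqq : IsSquare ((p:ℕ) : ZMod q) := by
    have := (legendreSym.eq_one_iff q hp0q).1 hrecip
    push_cast at this ⊢
    exact this
  constructor
  · intro ℓ _
    by_cases hl : ℓ = p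
    · subst hl
      exact iff_of_true (fun x hx => isUnit_of_qn x (qn_ne_zero ℓ q hns hq1 x hx)) rfl
    · refine iff_of_false ?_ hl
      intro hall
      obtain ⟨α, β, γ, hz, hne⟩ := exists_isotropic p q ℓ hp4 hq8 hqsqq hl
      set x : ℍ[ℚ_[ℓ], -(p:ℚ_[ℓ]), -(q:ℚ_[ℓ])] := ⟨α, β, γ, 0⟩ with hxdef
      have hx : x ≠ 0 := by
        intro h
        rw [QuaternionAlgebra.ext_iff] at h
        have hβ : β = 0 := by simpa using h.2.1
        have hγ : γ = 0 := by simpa using h.2.2.1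
        rcases hne with h1 | h1
        · exact one_ne_zero (h1 ▸ hβ)
        · exact one_ne_zero (h1 ▸ hγ)
      have hqn0 : qn x = 0 := by
        rw [qn_eq]
        show α^2 - (-(p:ℚ_[ℓ]))*β^2 - (-(q:ℚ_[ℓ]))*γ^2
          + (-(p:ℚ_[ℓ]))*(-(q:ℚ_[ℓ]))*(0:ℚ_[ℓ])^2 = 0
        linear_combination hz
      exact not_isUnit_of_qn x hx hqn0 (hall x hx)
  · intro x hx
    refine isUnit_of_qn x ?_
    have hp0 : (0:ℝ) < p := by exact_mod_cast hppr.pos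
    have hq0 : (0:ℝ) < q := by exact_mod_cast hqpr.pos
    have e : qn x = x.re^2 + p*x.imI^2 + q*x.imJ^2 + (p*q)*x.imK^2 := by
      rw [qn_eq]; ring
    intro h0
    rw [e] at h0
    apply hx
    have r1 : x.re = 0 := by
      have : x.re^2 = 0 := by
        nlinarith [sq_nonneg x.re, mul_nonneg hp0.le (sq_nonneg x.imI),
          mul_nonneg hq0.le (sq_nonneg x.imJ),
          mul_nonneg (mul_nonneg hp0.le hq0.le) (sq_nonneg x.imK)]
      exact sq_eq_zero_iff.1 this
    have r2 : x.imI = 0 := by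
      have : x.imI^2 = 0 := by
        nlinarith [sq_nonneg x.re, mul_nonneg hp0.le (sq_nonneg x.imI),
          mul_nonneg hq0.le (sq_nonneg x.imJ),
          mul_nonneg (mul_nonneg hp0.le hq0.le) (sq_nonneg x.imK)]
      exact sq_eq_zero_iff.1 this
    have r3 : x.imJ = 0 := by
      have : x.imJ^2 = 0 := by
        nlinarith [sq_nonneg x.re, mul_nonneg hp0.le (sq_nonneg x.imI),
          mul_nonneg hq0.le (sq_nonneg x.imJ),
          mul_nonneg (mul_nonneg hp0.le hq0.le) (sq_nonneg x.imK)]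
      exact sq_eq_zero_iff.1 this
    have r4 : x.imK = 0 := by
      have h4 : ((p:ℝ)*q) * x.imK^2 = 0 := by rw [r1, r2, r3] at h0; linarith
      rcases mul_eq_zero.1 h4 with h | h
      · exact absurd h (by positivity)
      · exact sq_eq_zero_iff.1 h
    ext <;> simp [r1, r2, r3, r4]
end

section
/- Let p and q be primes with p ≡ 1 (mod 4), q ≡ 3 (mod 4), and q a nonsquare modulo p (Legendre symbol (q|p) = −1). Then the quaternion algebra ℍ[ℚ, −q, −p] is the definite quaternion algebra of discriminant p: for every prime ℓ, the localization ℍ[ℚ_ℓ, −q, −p] is a division ring if and only if ℓ = p, and ℍ[ℝ, −q, −p] is a division ring. -/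
open Quaternion

/-! ### Generalities on quaternion algebras over a field -/

section QuatGeneral

variable {K : Type*} [Field K] {c₁ c₂ : K}

/-- The (reduced) norm of a general quaternion. -/
def qnorm (a : ℍ[K,c₁,c₂]) : K :=
  a.re^2 - c₁*a.imI^2 - c₂*a.imJ^2 + c₁*c₂*a.imK^2

theorem qa_mul_star (a : ℍ[K,c₁,c₂]) :
    a * star a = ((qnorm a : K) : ℍ[K,c₁,c₂]) := by
  ext <;> simp [qnorm, ← QuaternionAlgebra.coe_pow] <;> ring

theorem qa_star_mul (a : ℍ[K,c₁,c₂]) :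
    star a * a = ((qnorm a : K) : ℍ[K,c₁,c₂]) := by
  ext <;> simp [qnorm, ← QuaternionAlgebra.coe_pow] <;> ring

theorem qa_isUnit (a : ℍ[K,c₁,c₂]) (h : qnorm a ≠ 0) : IsUnit a := by
  refine ⟨⟨a, (qnorm a)⁻¹ • star a, ?_, ?_⟩, rfl⟩
  · rw [mul_smul_comm, qa_mul_star, QuaternionAlgebra.smul_coe, inv_mul_cancel₀ h,
      QuaternionAlgebra.coe_one]
  · rw [smul_mul_assoc, qa_star_mul, QuaternionAlgebra.smul_coe, inv_mul_cancel₀ h,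
      QuaternionAlgebra.coe_one]

theorem qa_not_isUnit (a : ℍ[K,c₁,c₂]) (h : qnorm a = 0) (h0 : a ≠ 0) : ¬ IsUnit a := by
  rintro ⟨u, rfl⟩
  have h1 : (u : ℍ[K,c₁,c₂]) * star (u : ℍ[K,c₁,c₂]) = 0 := by
    rw [qa_mul_star]; rw [h, QuaternionAlgebra.coe_zero]
  have h2 : star (u : ℍ[K,c₁,c₂]) = 0 := by
    have := congrArg (fun x => (↑u⁻¹ : ℍ[K,c₁,c₂]) * x) h1
    simpa [← mul_assoc] using this
  apply h0
  simpa using congrArg star h2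

end QuatGeneral

/-! ### Legendre symbol facts -/

theorem p_ne_q (p q : ℕ) (hp4 : p % 4 = 1) (hq4 : q % 4 = 3) : p ≠ q := fun h => by
  rw [h, hq4] at hp4; exact absurd hp4 (by norm_num)

theorem neg_q_not_square (p q : ℕ) [Fact p.Prime] [Fact q.Prime] (hp4 : p % 4 = 1)
    (hq4 : q % 4 = 3) (hleg : legendreSym p q = -1) :
    ¬ IsSquare ((-(q:ℤ) : ℤ) : ZMod p) := by
  have hp2 : p ≠ 2 := fun h => by rw [h] at hp4; norm_num at hp4
  rw [← legendreSym.eq_neg_one_iff]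
  have : (-(q:ℤ)) = -1 * (q:ℤ) := by ring
  rw [this, legendreSym.mul, legendreSym.at_neg_one hp2, ZMod.χ₄_nat_one_mod_four hp4]
  simpa using hleg

theorem neg_p_square (p q : ℕ) [Fact p.Prime] [Fact q.Prime] (hp4 : p % 4 = 1)
    (hq4 : q % 4 = 3) (hleg : legendreSym p q = -1) :
    IsSquare ((-(p:ℤ) : ℤ) : ZMod q) := by
  have hq2 : q ≠ 2 := fun h => by rw [h] at hq4; norm_num at hq4
  have hpq : p ≠ q := p_ne_q p q hp4 hq4
  have h0 : ((-(p:ℤ) : ℤ) : ZMod q) ≠ 0 := by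
    simp only [Int.cast_neg, Int.cast_natCast, neg_ne_zero, Ne, ZMod.natCast_eq_zero_iff]
    exact fun h => hpq ((Nat.prime_dvd_prime_iff_eq (Fact.out) (Fact.out)).mp h).symm
  rw [← legendreSym.eq_one_iff _ h0]
  have : (-(p:ℤ)) = -1 * (p:ℤ) := by ring
  rw [this, legendreSym.mul, legendreSym.at_neg_one hq2, ZMod.χ₄_nat_three_mod_four hq4,
    legendreSym.quadratic_reciprocity_one_mod_four hp4 hq2, hleg]
  norm_num

/-! ### Hensel-type lemmas -/

theorem hensel_quad (ℓ : ℕ) [Fact ℓ.Prime] (c d t : ℤ)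
    (h : ‖((c*t^2+d : ℤ) : ℤ_[ℓ])‖ < ‖((2*c*t : ℤ) : ℤ_[ℓ])‖^2) :
    ∃ s : ℚ_[ℓ], (c:ℚ_[ℓ])*s^2 + (d:ℚ_[ℓ]) = 0 := by
  set F : Polynomial ℤ_[ℓ] := Polynomial.C (c:ℤ_[ℓ]) * Polynomial.X^2 + Polynomial.C (d:ℤ_[ℓ])
    with hF
  have heval : ∀ z : ℤ_[ℓ], F.eval z = c * z^2 + d := by intro z; simp [hF]
  have hderiv : ∀ z : ℤ_[ℓ], F.derivative.eval z = 2*c*z := by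
    intro z
    simp [hF, Polynomial.derivative_C_mul]
    ring
  have h' : ‖F.eval ((t:ℤ_[ℓ]))‖ < ‖F.derivative.eval ((t:ℤ_[ℓ]))‖^2 := by
    rw [heval, hderiv]
    push_cast at h ⊢
    convert h using 3
  obtain ⟨z, hz, -⟩ := hensels_lemma h'
  rw [Polynomial.coe_aeval_eq_eval, heval] at hz
  refine ⟨(z : ℚ_[ℓ]), ?_⟩
  have := congrArg (fun x : ℤ_[ℓ] => (x : ℚ_[ℓ])) hz
  push_cast at this
  simpa using this

theorem hensel_quad_odd (ℓ : ℕ) [Fact ℓ.Prime] (c d t : ℤ)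
    (h1 : (ℓ:ℤ) ∣ c*t^2+d) (h2 : ¬ (ℓ:ℤ) ∣ 2*c*t) :
    ∃ s : ℚ_[ℓ], (c:ℚ_[ℓ])*s^2 + (d:ℚ_[ℓ]) = 0 := by
  apply hensel_quad ℓ c d t
  have hlt : ‖((c*t^2+d : ℤ) : ℤ_[ℓ])‖ < 1 := (PadicInt.norm_int_lt_one_iff_dvd _).mpr h1
  have heq : ‖((2*c*t : ℤ) : ℤ_[ℓ])‖ = 1 :=
    le_antisymm (PadicInt.norm_le_one _) <| not_lt.mp <|
      fun hc => h2 ((PadicInt.norm_int_lt_one_iff_dvd _).mp hc)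
  rw [heq]; simpa using hlt

theorem hensel_quad_two (d : ℤ) (h1 : (8:ℤ) ∣ 1+d) :
    ∃ s : ℚ_[2], s^2 + (d:ℚ_[2]) = 0 := by
  have key : ‖((1*1^2+d : ℤ) : ℤ_[2])‖ < ‖((2*1*1 : ℤ) : ℤ_[2])‖^2 := by
    have h8 : ((2:ℕ)^3 : ℤ) ∣ 1*1^2+d := by norm_num; omega
    have hle : ‖((1*1^2+d : ℤ) : ℤ_[2])‖ ≤ ((2:ℕ):ℝ)^(-(3:ℕ):ℤ) :=
      PadicInt.norm_int_le_pow_iff_dvd.mpr h8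
    have h2 : ‖((2*1*1 : ℤ) : ℤ_[2])‖ = ((2:ℕ):ℝ)⁻¹ := by
      rw [show ((2*1*1:ℤ):ℤ_[2]) = ((2:ℕ):ℤ_[2]) by norm_num]
      exact PadicInt.norm_p
    rw [h2]
    refine lt_of_le_of_lt hle ?_
    norm_num
  obtain ⟨s, hs⟩ := hensel_quad 2 1 d 1 key
  exact ⟨s, by simpa using hs⟩

/-! ### Isotropy at every prime `ℓ ≠ p` -/

theorem exists_isotropic_s4 (p q : ℕ) [Fact p.Prime] [Fact q.Prime]
    (hp4 : p % 4 = 1) (hq4 : q % 4 = 3) (hleg : legendreSym p q = -1)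
    (ℓ : ℕ) [Fact ℓ.Prime] (hℓ : ℓ ≠ p) :
    ∃ r x y z : ℚ_[ℓ], (x = 1 ∨ y = 1) ∧
      r^2 + (q:ℚ_[ℓ])*x^2 + (p:ℚ_[ℓ])*y^2 + (q:ℚ_[ℓ])*(p:ℚ_[ℓ])*z^2 = 0 := by
  have hpp : p.Prime := Fact.out
  have hqp : q.Prime := Fact.out
  have hℓp : ℓ.Prime := Fact.out
  rcases hℓp.eq_two_or_odd' with rfl | hodd
  · -- ℓ = 2
    have h83 : q % 8 = 3 ∨ q % 8 = 7 := by omega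
    rcases h83 with h83 | h87
    · -- q ≡ 3 mod 8 : use (s,1,1,1)
      obtain ⟨m, hm⟩ : ∃ m, q = 8*m+3 := ⟨q/8, by omega⟩
      obtain ⟨n, hn⟩ : ∃ n, p = 4*n+1 := ⟨p/4, by omega⟩
      have hdvd8 : (8:ℤ) ∣ 1 + ((q:ℤ) + p + p*q) := by
        have : (1:ℤ) + ((q:ℤ) + p + p*q) = 8*((2*m+1)*(2*n+1)) := by
          subst hm hn; push_cast; ring
        exact ⟨_, this⟩
      obtain ⟨s, hs⟩ := hensel_quad_two ((q:ℤ) + p + p*q) hdvd8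
      refine ⟨s, 1, 1, 1, Or.inl rfl, ?_⟩
      push_cast at hs ⊢
      linear_combination hs
    · -- q ≡ 7 mod 8 : use (s,1,0,0)
      obtain ⟨s, hs⟩ := hensel_quad_two (q:ℤ) (by omega)
      refine ⟨s, 1, 0, 0, Or.inl rfl, ?_⟩
      push_cast at hs ⊢
      linear_combination hs
  · have hℓ2 : ℓ ≠ 2 := by rcases hodd with ⟨k, hk⟩; omega
    have hℓZ : Prime (ℓ:ℤ) := Nat.prime_iff_prime_int.mp hℓp
    have hdvdnat : ∀ r : ℕ, Nat.Prime r → ℓ ≠ r → ¬ (ℓ:ℤ) ∣ (r:ℤ) := by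
      intro r hr hne h
      exact hne ((Nat.prime_dvd_prime_iff_eq hℓp hr).mp (Int.ofNat_dvd.mp h))
    have hndvd2' : ¬ (ℓ:ℤ) ∣ 2 := by
      have := hdvdnat 2 Nat.prime_two hℓ2
      simpa using this
    have hvaldvd : ∀ b : ZMod ℓ, b ≠ 0 → ¬ (ℓ:ℤ) ∣ (b.val : ℤ) := by
      intro b hb0 h
      apply hb0
      have : ((b.val : ℕ) : ZMod ℓ) = 0 :=
        (ZMod.natCast_eq_zero_iff _ _).mpr (Int.ofNat_dvd.mp h)
      rwa [ZMod.natCast_val, ZMod.cast_id] at this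
    by_cases hq : ℓ = q
    · -- ℓ = q : use (s,0,1,0)
      subst hq
      obtain ⟨b, hb⟩ := neg_p_square p ℓ hp4 hq4 hleg
      push_cast at hb
      have hbv : ((b.val : ℕ) : ZMod ℓ) = b := by rw [ZMod.natCast_val, ZMod.cast_id]
      have hb0 : b ≠ 0 := by
        rintro rfl
        rw [mul_zero] at hb
        have : ((p:ℤ) : ZMod ℓ) = 0 := by push_cast; linear_combination -hb
        rw [ZMod.intCast_zmod_eq_zero_iff_dvd] at this
        exact hℓ ((Nat.prime_dvd_prime_iff_eq hℓp hpp).mp (Int.ofNat_dvd.mp this))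
      have h1 : (ℓ:ℤ) ∣ 1*(b.val:ℤ)^2+(p:ℤ) := by
        rw [← ZMod.intCast_zmod_eq_zero_iff_dvd]
        push_cast
        rw [hbv]
        linear_combination -hb
      have h2 : ¬ (ℓ:ℤ) ∣ 2*1*(b.val:ℤ) := by
        rw [show (2*1*(b.val:ℤ)) = 2*(b.val:ℤ) by ring]
        intro h
        rcases hℓZ.dvd_mul.mp h with h | h
        · exact hndvd2' h
        · exact hvaldvd b hb0 h
      obtain ⟨s, hs⟩ := hensel_quad_odd ℓ 1 (p:ℤ) (b.val:ℤ) h1 h2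
      refine ⟨s, 0, 1, 0, Or.inr rfl, ?_⟩
      push_cast at hs ⊢
      linear_combination hs
    · -- generic odd ℓ, ℓ ∉ {2, p, q}
      have hqne : ((q:ℕ) : ZMod ℓ) ≠ 0 := by
        intro h
        rw [ZMod.natCast_eq_zero_iff] at h
        exact hq ((Nat.prime_dvd_prime_iff_eq hℓp hqp).mp h)
      have hpne : ((p:ℕ) : ZMod ℓ) ≠ 0 := by
        intro h
        rw [ZMod.natCast_eq_zero_iff] at h
        exact hℓ ((Nat.prime_dvd_prime_iff_eq hℓp hpp).mp h)
      have hcard : Fintype.card (ZMod ℓ) % 2 = 1 := by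
        rw [ZMod.card]; exact Nat.odd_iff.mp hodd
      obtain ⟨a, b, hab⟩ := FiniteField.exists_root_sum_quadratic
        (f := (Polynomial.X^2 : Polynomial (ZMod ℓ)))
        (g := Polynomial.C ((q:ℕ) : ZMod ℓ) * Polynomial.X^2 +
              Polynomial.C 0 * Polynomial.X + Polynomial.C ((p:ℕ) : ZMod ℓ))
        (Polynomial.degree_X_pow 2) (Polynomial.degree_quadratic hqne) hcard
      simp only [Polynomial.eval_add, Polynomial.eval_mul, Polynomial.eval_pow,
        Polynomial.eval_X, Polynomial.eval_C, zero_mul, add_zero] at hab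
      have hab' : a^2 + (q:ZMod ℓ)*b^2 + (p:ZMod ℓ) = 0 := by linear_combination hab
      have hav : ((a.val : ℕ) : ZMod ℓ) = a := by rw [ZMod.natCast_val, ZMod.cast_id]
      have hbv : ((b.val : ℕ) : ZMod ℓ) = b := by rw [ZMod.natCast_val, ZMod.cast_id]
      by_cases ha0 : a = 0
      · -- a = 0 : q b² + p = 0, use (0, s, 1, 0)
        have hb0 : b ≠ 0 := by
          rintro rfl
          apply hpne
          rw [ha0] at hab'
          simpa using hab'
        have h1 : (ℓ:ℤ) ∣ (q:ℤ)*(b.val:ℤ)^2+(p:ℤ) := by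
          rw [← ZMod.intCast_zmod_eq_zero_iff_dvd]
          push_cast
          rw [hbv]
          rw [ha0] at hab'
          linear_combination hab'
        have h2 : ¬ (ℓ:ℤ) ∣ 2*(q:ℤ)*(b.val:ℤ) := by
          intro h
          rcases hℓZ.dvd_mul.mp h with h | h
          · rcases hℓZ.dvd_mul.mp h with h | h
            · exact hndvd2' h
            · exact hdvdnat q hqp hq h
          · exact hvaldvd b hb0 h
        obtain ⟨s, hs⟩ := hensel_quad_odd ℓ (q:ℤ) (p:ℤ) (b.val:ℤ) h1 h2
        refine ⟨0, s, 1, 0, Or.inr rfl, ?_⟩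
        push_cast at hs ⊢
        linear_combination hs
      · -- a ≠ 0 : use (s, b, 1, 0)
        have h1 : (ℓ:ℤ) ∣ 1*(a.val:ℤ)^2+((q:ℤ)*(b.val:ℤ)^2+(p:ℤ)) := by
          rw [← ZMod.intCast_zmod_eq_zero_iff_dvd]
          push_cast
          rw [hav, hbv]
          linear_combination hab'
        have h2 : ¬ (ℓ:ℤ) ∣ 2*1*(a.val:ℤ) := by
          rw [show (2*1*(a.val:ℤ)) = 2*(a.val:ℤ) by ring]
          intro h
          rcases hℓZ.dvd_mul.mp h with h | h
          · exact hndvd2' h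
          · exact hvaldvd a ha0 h
        obtain ⟨s, hs⟩ := hensel_quad_odd ℓ 1 ((q:ℤ)*(b.val:ℤ)^2+(p:ℤ)) (a.val:ℤ) h1 h2
        refine ⟨s, ((b.val:ℕ) : ℚ_[ℓ]), 1, 0, Or.inr rfl, ?_⟩
        push_cast at hs ⊢
        linear_combination hs

/-! ### Anisotropy at `p` -/

section Aniso

variable (p q : ℕ) [Fact p.Prime] [Fact q.Prime]
  (hp4 : p % 4 = 1) (hq4 : q % 4 = 3) (hleg : legendreSym p q = -1)

theorem dvd_iff_toZMod (x : ℤ_[p]) : PadicInt.toZMod x = 0 ↔ ((p:ℕ) : ℤ_[p]) ∣ x := by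
  rw [show (PadicInt.toZMod x = 0) ↔ x ∈ RingHom.ker (PadicInt.toZMod (p := p)) from Iff.rfl,
    PadicInt.ker_toZMod, PadicInt.maximalIdeal_eq_span_p, Ideal.mem_span_singleton]

include hp4 hq4 hleg in
theorem key_residue (u v : ℤ_[p]) (h : ((p:ℕ) : ℤ_[p]) ∣ u^2 + (q:ℤ_[p])*v^2) :
    ((p:ℕ) : ℤ_[p]) ∣ u ∧ ((p:ℕ) : ℤ_[p]) ∣ v := by
  set φ : ℤ_[p] →+* ZMod p := PadicInt.toZMod
  have hme : φ (u^2 + (q:ℤ_[p])*v^2) = 0 := (dvd_iff_toZMod p _).mpr h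
  have he : φ u ^2 + (q : ZMod p) * φ v ^2 = 0 := by
    simpa [map_add, map_mul, map_pow, map_natCast] using hme
  have hv : φ v = 0 := by
    by_contra hv
    apply neg_q_not_square p q hp4 hq4 hleg
    refine ⟨φ u * (φ v)⁻¹, ?_⟩
    have h1 : (φ u * (φ v)⁻¹) * (φ u * (φ v)⁻¹) = -(q : ZMod p) := by
      field_simp
      linear_combination he
    rw [h1]
    push_cast
    ring
  have hu : φ u = 0 := by
    rw [hv] at he
    have : φ u ^ 2 = 0 := by linear_combination he
    exact pow_eq_zero_iff (n := 2) (by norm_num) |>.mp this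
  exact ⟨(dvd_iff_toZMod p u).mp hu, (dvd_iff_toZMod p v).mp hv⟩

include hp4 hq4 hleg in
theorem descent (u v y z : ℤ_[p])
    (h : u^2 + (q:ℤ_[p])*v^2 + (p:ℤ_[p])*y^2 + (p:ℤ_[p])*(q:ℤ_[p])*z^2 = 0) :
    ∃ u' v' y' z' : ℤ_[p], u = (p:ℤ_[p])*u' ∧ v = (p:ℤ_[p])*v' ∧ y = (p:ℤ_[p])*y' ∧
      z = (p:ℤ_[p])*z' ∧
      u'^2 + (q:ℤ_[p])*v'^2 + (p:ℤ_[p])*y'^2 + (p:ℤ_[p])*(q:ℤ_[p])*z'^2 = 0 := by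
  have hp0 : ((p:ℕ) : ℤ_[p]) ≠ 0 := by
    exact_mod_cast Nat.cast_ne_zero.mpr (Fact.out : p.Prime).ne_zero
  have h1 : ((p:ℕ) : ℤ_[p]) ∣ u^2 + (q:ℤ_[p])*v^2 :=
    ⟨-(y^2 + (q:ℤ_[p])*z^2), by linear_combination h⟩
  obtain ⟨⟨u', rfl⟩, ⟨v', rfl⟩⟩ := key_residue p q hp4 hq4 hleg u v h1
  have h2 : ((p:ℕ) : ℤ_[p]) ∣ y^2 + (q:ℤ_[p])*z^2 := by
    refine ⟨-(u'^2 + (q:ℤ_[p])*v'^2), ?_⟩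
    apply mul_left_cancel₀ hp0
    linear_combination h
  obtain ⟨⟨y', rfl⟩, ⟨z', rfl⟩⟩ := key_residue p q hp4 hq4 hleg y z h2
  refine ⟨u', v', y', z', rfl, rfl, rfl, rfl, ?_⟩
  apply mul_left_cancel₀ hp0
  apply mul_left_cancel₀ hp0
  linear_combination h

include hp4 hq4 hleg in
theorem pow_dvd_all (n : ℕ) (u v y z : ℤ_[p])
    (h : u^2 + (q:ℤ_[p])*v^2 + (p:ℤ_[p])*y^2 + (p:ℤ_[p])*(q:ℤ_[p])*z^2 = 0) :
    ((p:ℤ_[p]))^n ∣ u ∧ ((p:ℤ_[p]))^n ∣ v ∧ ((p:ℤ_[p]))^n ∣ y ∧ ((p:ℤ_[p]))^n ∣ z := by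
  induction n generalizing u v y z with
  | zero => simp
  | succ n ih =>
    obtain ⟨u', v', y', z', rfl, rfl, rfl, rfl, h'⟩ := descent p q hp4 hq4 hleg u v y z h
    obtain ⟨d1, d2, d3, d4⟩ := ih u' v' y' z' h'
    refine ⟨?_, ?_, ?_, ?_⟩ <;> rw [pow_succ'] <;>
      [exact mul_dvd_mul_left _ d1; exact mul_dvd_mul_left _ d2;
       exact mul_dvd_mul_left _ d3; exact mul_dvd_mul_left _ d4]

theorem zero_of_all_pow_dvd (x : ℤ_[p]) (h : ∀ n : ℕ, ((p:ℤ_[p]))^n ∣ x) : x = 0 := by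
  by_contra hx
  have hpos : 0 < ‖x‖ := norm_pos_iff.mpr hx
  have hp1 : 1 < (p:ℝ) := by exact_mod_cast (Fact.out : p.Prime).one_lt
  have hinv : (p:ℝ)⁻¹ < 1 := inv_lt_one_of_one_lt₀ hp1
  obtain ⟨n, hn⟩ := exists_pow_lt_of_lt_one hpos hinv
  have hle : ‖x‖ ≤ (p:ℝ)^(-(n:ℤ)) := by
    refine (PadicInt.norm_le_pow_iff_mem_span_pow x n).mpr ?_
    exact Ideal.mem_span_singleton.mpr (h n)
  rw [zpow_neg, zpow_natCast, ← inv_pow] at hle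
  exact absurd (lt_of_le_of_lt hle hn) (lt_irrefl _)

include hp4 hq4 hleg in
theorem aniso_rat (r x y z : ℚ_[p])
    (h : r^2 + (q:ℚ_[p])*x^2 + (p:ℚ_[p])*y^2 + (q:ℚ_[p])*(p:ℚ_[p])*z^2 = 0) :
    r = 0 ∧ x = 0 ∧ y = 0 ∧ z = 0 := by
  have hp1 : 1 < (p:ℝ) := by exact_mod_cast (Fact.out : p.Prime).one_lt
  have hbound : ∀ s : ℚ_[p], ∃ n : ℕ, ∀ N : ℕ, n ≤ N → ‖(p:ℚ_[p])^N * s‖ ≤ 1 := by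
    intro s
    obtain ⟨n, hn⟩ := pow_unbounded_of_one_lt ‖s‖ hp1
    refine ⟨n, fun N hN => ?_⟩
    rw [norm_mul, norm_pow, Padic.norm_p]
    calc ((p:ℝ))⁻¹^N * ‖s‖ ≤ (p:ℝ)⁻¹^N * (p:ℝ)^n := by
          exact mul_le_mul_of_nonneg_left hn.le (by positivity)
      _ ≤ (p:ℝ)⁻¹^N * (p:ℝ)^N := by
          apply mul_le_mul_of_nonneg_left _ (by positivity)
          exact pow_le_pow_right₀ hp1.le hN
      _ = 1 := by
          rw [inv_pow, inv_mul_cancel₀ (by positivity)]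
  obtain ⟨n1, h1⟩ := hbound r
  obtain ⟨n2, h2⟩ := hbound x
  obtain ⟨n3, h3⟩ := hbound y
  obtain ⟨n4, h4⟩ := hbound z
  set N := max (max n1 n2) (max n3 n4) with hN
  have hU := h1 N (le_trans (le_max_left _ _) (le_max_left _ _))
  have hV := h2 N (le_trans (le_max_right _ _) (le_max_left _ _))
  have hY := h3 N (le_trans (le_max_left _ _) (le_max_right _ _))
  have hZ := h4 N (le_trans (le_max_right _ _) (le_max_right _ _))
  set U : ℤ_[p] := ⟨_, hU⟩
  set V : ℤ_[p] := ⟨_, hV⟩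
  set Y : ℤ_[p] := ⟨_, hY⟩
  set Z : ℤ_[p] := ⟨_, hZ⟩
  have hUc : (U : ℚ_[p]) = (p:ℚ_[p])^N * r := rfl
  have hVc : (V : ℚ_[p]) = (p:ℚ_[p])^N * x := rfl
  have hYc : (Y : ℚ_[p]) = (p:ℚ_[p])^N * y := rfl
  have hZc : (Z : ℚ_[p]) = (p:ℚ_[p])^N * z := rfl
  have heq : U^2 + (q:ℤ_[p])*V^2 + (p:ℤ_[p])*Y^2 + (p:ℤ_[p])*(q:ℤ_[p])*Z^2 = 0 := by
    apply Subtype.coe_injective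
    push_cast
    linear_combination ((p:ℚ_[p])^N)^2 * h
  have hall : U = 0 ∧ V = 0 ∧ Y = 0 ∧ Z = 0 := by
    refine ⟨?_, ?_, ?_, ?_⟩ <;> apply zero_of_all_pow_dvd p <;> intro n
    · exact (pow_dvd_all p q hp4 hq4 hleg n U V Y Z heq).1
    · exact (pow_dvd_all p q hp4 hq4 hleg n U V Y Z heq).2.1
    · exact (pow_dvd_all p q hp4 hq4 hleg n U V Y Z heq).2.2.1
    · exact (pow_dvd_all p q hp4 hq4 hleg n U V Y Z heq).2.2.2
  have hpN : ((p:ℚ_[p]))^N ≠ 0 := by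
    apply pow_ne_zero
    exact_mod_cast Nat.cast_ne_zero.mpr (Fact.out : p.Prime).ne_zero
  obtain ⟨e1, e2, e3, e4⟩ := hall
  have g1 : (p:ℚ_[p])^N * r = 0 := by rw [← hUc, e1]; rfl
  have g2 : (p:ℚ_[p])^N * x = 0 := by rw [← hVc, e2]; rfl
  have g3 : (p:ℚ_[p])^N * y = 0 := by rw [← hYc, e3]; rfl
  have g4 : (p:ℚ_[p])^N * z = 0 := by rw [← hZc, e4]; rfl
  exact ⟨(mul_eq_zero.mp g1).resolve_left hpN,
    (mul_eq_zero.mp g2).resolve_left hpN,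
    (mul_eq_zero.mp g3).resolve_left hpN,
    (mul_eq_zero.mp g4).resolve_left hpN⟩

end Aniso

/-- For primes `p ≡ 1 (mod 4)`, `q ≡ 3 (mod 4)` with `q` a nonsquare mod `p`, the
quaternion algebra `ℍ[ℚ, -q, -p]` is the definite quaternion algebra of
discriminant `p`: it is division exactly at `ℝ` and at the prime `p`. -/
theorem quaternionAlgebra_neg_q_neg_p_discriminant
    (p q : ℕ) [Fact p.Prime] [Fact q.Prime]
    (hp4 : p % 4 = 1) (hq4 : q % 4 = 3) (hleg : legendreSym p q = -1) :
    (∀ (ℓ : ℕ) [Fact ℓ.Prime],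
      ((∀ x : ℍ[ℚ_[ℓ], (-(q : ℚ_[ℓ])), (-(p : ℚ_[ℓ]))], x ≠ 0 → IsUnit x) ↔ ℓ = p)) ∧
    (∀ x : ℍ[ℝ, (-(q : ℝ)), (-(p : ℝ))], x ≠ 0 → IsUnit x) := by
  have hq0R : (0:ℝ) < q := by exact_mod_cast (Fact.out : q.Prime).pos
  have hp0R : (0:ℝ) < p := by exact_mod_cast (Fact.out : p.Prime).pos
  constructor
  · intro ℓ _
    constructor
    · -- if division, then ℓ = p
      intro hdiv
      by_contra hne
      obtain ⟨r, x, y, z, hxy, heq⟩ := exists_isotropic_s4 p q hp4 hq4 hleg ℓ hne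
      set a : ℍ[ℚ_[ℓ], (-(q : ℚ_[ℓ])), (-(p : ℚ_[ℓ]))] := ⟨r, x, y, z⟩ with ha
      have hqn : qnorm a = 0 := by
        show r^2 - (-(q:ℚ_[ℓ]))*x^2 - (-(p:ℚ_[ℓ]))*y^2 + (-(q:ℚ_[ℓ]))*(-(p:ℚ_[ℓ]))*z^2 = 0
        linear_combination heq
      have ha0 : a ≠ 0 := by
        intro h0
        rcases hxy with hx1 | hy1
        · have := congrArg QuaternionAlgebra.imI h0
          rw [ha] at this
          simp [hx1] at this
        · have := congrArg QuaternionAlgebra.imJ h0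
          rw [ha] at this
          simp [hy1] at this
      exact qa_not_isUnit a hqn ha0 (hdiv a ha0)
    · -- if ℓ = p, division
      rintro rfl
      intro a ha
      apply qa_isUnit a
      intro hqn
      apply ha
      have hsum : a.re^2 + (q:ℚ_[ℓ])*a.imI^2 + (ℓ:ℚ_[ℓ])*a.imJ^2 +
          (q:ℚ_[ℓ])*(ℓ:ℚ_[ℓ])*a.imK^2 = 0 := by
        have : a.re^2 - (-(q:ℚ_[ℓ]))*a.imI^2 - (-(ℓ:ℚ_[ℓ]))*a.imJ^2 +
            (-(q:ℚ_[ℓ]))*(-(ℓ:ℚ_[ℓ]))*a.imK^2 = 0 := hqn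
        linear_combination this
      obtain ⟨e1, e2, e3, e4⟩ := aniso_rat ℓ q hp4 hq4 hleg a.re a.imI a.imJ a.imK hsum
      apply QuaternionAlgebra.ext e1 e2 e3 e4
  · -- ℝ is division
    intro a ha
    apply qa_isUnit a
    intro hqn
    apply ha
    have hsum : a.re^2 + (q:ℝ)*a.imI^2 + (p:ℝ)*a.imJ^2 + (q:ℝ)*(p:ℝ)*a.imK^2 = 0 := by
      have : a.re^2 - (-(q:ℝ))*a.imI^2 - (-(p:ℝ))*a.imJ^2 +
          (-(q:ℝ))*(-(p:ℝ))*a.imK^2 = 0 := hqn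
      linear_combination this
    have h1 : a.re^2 = 0 := by nlinarith [sq_nonneg a.re, sq_nonneg a.imI, sq_nonneg a.imJ, sq_nonneg a.imK, mul_pos hq0R hp0R]
    have h2 : a.imI^2 = 0 := by nlinarith [sq_nonneg a.re, sq_nonneg a.imI, sq_nonneg a.imJ, sq_nonneg a.imK, mul_pos hq0R hp0R]
    have h3 : a.imJ^2 = 0 := by nlinarith [sq_nonneg a.re, sq_nonneg a.imI, sq_nonneg a.imJ, sq_nonneg a.imK, mul_pos hq0R hp0R]
    have h4 : a.imK^2 = 0 := by nlinarith [sq_nonneg a.re, sq_nonneg a.imI, sq_nonneg a.imJ, sq_nonneg a.imK, mul_pos hq0R hp0R]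
    exact QuaternionAlgebra.ext (pow_eq_zero_iff two_ne_zero |>.mp h1)
      (pow_eq_zero_iff two_ne_zero |>.mp h2)
      (pow_eq_zero_iff two_ne_zero |>.mp h3)
      (pow_eq_zero_iff two_ne_zero |>.mp h4)
end
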